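/- arXiv:2404.11092 — 2 statements merged into one kernel-verified Lean document; each statement's English description precedes it below -/
import Mathlib

section
/- For every x ∈ ℝ^q, the function s ↦ (1 − cos⟨s, x⟩) w_*(s) is Lebesgue integrable on ℝ^q and ∫_{ℝ^q} (1 − cos⟨s, x⟩) w_*(s) ds = ‖x‖. -/
open MeasureTheory

/-- The non-integrable weighting function `w_*(s) = 1 / (c_q ‖s‖^{1+q})` on `ℝ^q`, with
`c_q = π^{(1+q)/2} / Γ((1+q)/2)`. -/
noncomputable def wstar (q : ℕ) (s : EuclideanSpace ℝ (Fin q)) : ℝ :=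
  1 / ((Real.pi ^ ((1 + (q : ℝ)) / 2) / Real.Gamma ((1 + (q : ℝ)) / 2)) * ‖s‖ ^ (1 + q))

open MeasureTheory Real Set
open scoped Real ENNReal

section Main

variable {q : ℕ}
local notation "E" => EuclideanSpace ℝ (Fin q)


-- Gaussian integrability with cos factor
lemma gauss_int (t : ℝ) (ht : 0 < t) (x : EuclideanSpace ℝ (Fin q)) :
    Integrable (fun s : E => (1 - Real.cos (inner ℝ s x)) * Real.exp (-t * ‖s‖^2)) := by
  have h0 : Integrable (fun s : E => Real.exp (-t * ‖s‖^2)) := by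
    have := (GaussianFourier.integrable_cexp_neg_mul_sq_norm_add (V := E)
      (b := (t:ℂ)) (by simpa using ht) 0 0).norm
    refine this.congr (Filter.Eventually.of_forall fun s => ?_)
    simp only [Complex.norm_exp]
    norm_num
    left
    norm_cast
  refine (h0.bdd_mul (c := 2) ?_ (Filter.Eventually.of_forall fun s => ?_))
  · exact (Continuous.aestronglyMeasurable (continuous_const.sub (Real.continuous_cos.comp (continuous_id.inner continuous_const))))
  · have := Real.neg_one_le_cos (inner ℝ s x)
    have := Real.cos_le_one (inner (𝕜 := ℝ) s x)
    rw [Real.norm_eq_abs, abs_le]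
    constructor <;> nlinarith

lemma gauss_cos_only_int (t : ℝ) (ht : 0 < t) (x : EuclideanSpace ℝ (Fin q)) :
    Integrable (fun s : E => Real.cos (inner ℝ s x) * Real.exp (-t * ‖s‖^2)) := by
  have h0 : Integrable (fun s : E => Real.exp (-t * ‖s‖^2)) := by
    have := (GaussianFourier.integrable_cexp_neg_mul_sq_norm_add (V := E)
      (b := (t:ℂ)) (by simpa using ht) 0 0).norm
    refine this.congr (Filter.Eventually.of_forall fun s => ?_)
    simp only [Complex.norm_exp]
    norm_num
    left
    norm_cast
  refine (h0.bdd_mul (c := 1) ?_ (Filter.Eventually.of_forall fun s => ?_))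
  · exact (Real.continuous_cos.comp (continuous_id.inner continuous_const)).aestronglyMeasurable
  · exact Real.abs_cos_le_one _

lemma gauss_cos_val (t : ℝ) (ht : 0 < t) (x : EuclideanSpace ℝ (Fin q)) :
    ∫ s : E, Real.cos (inner ℝ s x) * Real.exp (-t * ‖s‖^2)
      = (Real.pi / t) ^ ((q:ℝ)/2) * Real.exp (-‖x‖^2/(4*t)) := by
  have hb : 0 < (t:ℂ).re := by simpa using ht
  have A := GaussianFourier.integral_cexp_neg_mul_sq_norm_add (V := E) hb Complex.I x
  have hre : (∫ s : E, (Complex.exp (-(t:ℂ) * ‖s‖^2 + Complex.I * (inner ℝ x s : ℝ))).re)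
      = ((Real.pi / t : ℂ) ^ ((Module.finrank ℝ E : ℂ) / 2) *
          Complex.exp (Complex.I ^ 2 * (‖x‖:ℂ)^2 / (4 * (t:ℂ)))).re := by
    rw [show (fun s : E => (Complex.exp (-(t:ℂ) * ‖s‖^2 + Complex.I * (inner ℝ x s : ℝ))).re)
        = fun s : E => RCLike.re (Complex.exp (-(t:ℂ) * ‖s‖^2 + Complex.I * (inner ℝ x s : ℝ)))
        from rfl]
    rw [integral_re (GaussianFourier.integrable_cexp_neg_mul_sq_norm_add hb Complex.I x), A]
    simp [RCLike.re_to_complex]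
  calc ∫ s : E, Real.cos (inner ℝ s x) * Real.exp (-t * ‖s‖^2)
      = ∫ s : E, (Complex.exp (-(t:ℂ) * ‖s‖^2 + Complex.I * (inner ℝ x s : ℝ))).re := by
        congr 1; ext s
        rw [show -(t:ℂ) * ‖s‖^2 + Complex.I * (inner ℝ x s : ℝ)
            = ((-t * ‖s‖^2 : ℝ) : ℂ) + ((inner ℝ x s : ℝ) : ℝ) * Complex.I by
          push_cast; ring]
        rw [Complex.exp_re]
        simp [← Complex.ofReal_pow, real_inner_comm x s, mul_comm]
    _ = ((Real.pi / t : ℂ) ^ ((Module.finrank ℝ E : ℂ) / 2) *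
          Complex.exp (Complex.I ^ 2 * (‖x‖:ℂ)^2 / (4 * t))).re := by
        rw [hre]
    _ = (Real.pi / t) ^ ((q:ℝ)/2) * Real.exp (-‖x‖^2/(4*t)) := by
        rw [Complex.I_sq, finrank_euclideanSpace_fin]
        rw [show (-1 : ℂ) * (‖x‖:ℂ)^2 / (4 * t) = ((-‖x‖^2/(4*t) : ℝ) : ℂ) by push_cast; ring]
        rw [← Complex.ofReal_exp]
        rw [show ((Real.pi : ℂ) / (t : ℂ)) ^ ((q : ℂ) / 2)
            = (((Real.pi / t) ^ ((q:ℝ)/2) : ℝ) : ℂ) by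
          rw [← Complex.ofReal_div, Complex.ofReal_cpow (by positivity)]; norm_num]
        rw [← Complex.ofReal_mul, Complex.ofReal_re]

lemma gauss0_int (t : ℝ) (ht : 0 < t) :
    Integrable (fun s : E => Real.exp (-t * ‖s‖^2)) := by
  have := (GaussianFourier.integrable_cexp_neg_mul_sq_norm_add (V := E)
    (b := (t:ℂ)) (by simpa using ht) 0 0).norm
  refine this.congr (Filter.Eventually.of_forall fun s => ?_)
  simp only [Complex.norm_exp]
  norm_num
  left
  norm_cast

lemma gauss_full (t : ℝ) (ht : 0 < t) (x : EuclideanSpace ℝ (Fin q)) :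
    ∫ s : E, (1 - Real.cos (inner ℝ s x)) * Real.exp (-t * ‖s‖^2)
      = (Real.pi / t) ^ ((q:ℝ)/2) * (1 - Real.exp (-‖x‖^2/(4*t))) := by
  have h0 : Integrable (fun s : E => Real.exp (-t * ‖s‖^2)) := gauss0_int t ht
  have h1 := gauss_cos_only_int t ht x
  have : (fun s : E => (1 - Real.cos (inner ℝ s x)) * Real.exp (-t * ‖s‖^2))
      = fun s : E => Real.exp (-t * ‖s‖^2) - Real.cos (inner ℝ s x) * Real.exp (-t * ‖s‖^2) := by
    ext s; ring
  rw [this, integral_sub h0 h1, gauss_cos_val t ht x]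
  have hg : ∫ s : E, Real.exp (-t * ‖s‖^2) = (Real.pi / t) ^ ((q:ℝ)/2) := by
    have := GaussianFourier.integral_rexp_neg_mul_sq_norm (V := E) ht
    simpa [finrank_euclideanSpace_fin] using this
  rw [hg]; ring

lemma one_sub_exp_neg_le (y : ℝ) (hy : 0 ≤ y) : 1 - Real.exp (-y) ≤ y := by
  nlinarith [Real.add_one_le_exp (-y)]

lemma one_sub_exp_neg_nonneg (y : ℝ) (hy : 0 ≤ y) : 0 ≤ 1 - Real.exp (-y) := by
  have : Real.exp (-y) ≤ Real.exp 0 := Real.exp_le_exp.mpr (by linarith)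
  rw [Real.exp_zero] at this
  linarith

lemma oneD_meas : Measurable (fun u : ℝ => u ^ (-(3:ℝ)/2) * (1 - Real.exp (-u))) := by
  fun_prop

lemma oneD_int : IntegrableOn (fun u : ℝ => u ^ (-(3:ℝ)/2) * (1 - Real.exp (-u))) (Ioi 0) := by
  rw [← Ioc_union_Ioi_eq_Ioi (zero_le_one : (0:ℝ) ≤ 1), integrableOn_union]
  constructor
  · refine Integrable.mono (g := fun u : ℝ => u ^ (-(1:ℝ)/2)) ?_
      oneD_meas.aestronglyMeasurable.restrict ?_
    · exact (integrableOn_Ioc_iff_integrableOn_Ioo (f := fun u : ℝ => u ^ (-(1:ℝ)/2))).mpr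
        ((intervalIntegral.integrableOn_Ioo_rpow_iff zero_lt_one).mpr (by norm_num))
    · filter_upwards [ae_restrict_mem measurableSet_Ioc] with u hu
      have hu0 : 0 < u := hu.1
      rw [Real.norm_eq_abs, Real.norm_eq_abs, abs_of_nonneg, abs_of_nonneg]
      · calc u ^ (-(3:ℝ)/2) * (1 - Real.exp (-u)) ≤ u ^ (-(3:ℝ)/2) * u := by
              have := one_sub_exp_neg_le u hu0.le
              have h2 : (0:ℝ) ≤ u ^ (-(3:ℝ)/2) := (Real.rpow_pos_of_pos hu0 _).le
              nlinarith
          _ = u ^ (-(1:ℝ)/2) := by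
              rw [← Real.rpow_add_one hu0.ne']
              norm_num
      · exact (Real.rpow_pos_of_pos hu0 _).le
      · exact mul_nonneg (Real.rpow_pos_of_pos hu0 _).le
          (one_sub_exp_neg_nonneg u hu0.le)
  · refine Integrable.mono (g := fun u : ℝ => u ^ (-(3:ℝ)/2)) ?_
      oneD_meas.aestronglyMeasurable.restrict ?_
    · exact integrableOn_Ioi_rpow_of_lt (by norm_num) zero_lt_one
    · filter_upwards [ae_restrict_mem measurableSet_Ioi] with u hu
      have hu0 : (0:ℝ) < u := lt_trans zero_lt_one hu
      rw [Real.norm_eq_abs, Real.norm_eq_abs, abs_of_nonneg, abs_of_nonneg]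
      · have h1 : 1 - Real.exp (-u) ≤ 1 := by linarith [Real.exp_pos (-u)]
        have h2 : (0:ℝ) ≤ u ^ (-(3:ℝ)/2) := (Real.rpow_pos_of_pos hu0 _).le
        nlinarith [one_sub_exp_neg_nonneg u hu0.le]
      · exact (Real.rpow_pos_of_pos hu0 _).le
      · exact mul_nonneg (Real.rpow_pos_of_pos hu0 _).le
          (one_sub_exp_neg_nonneg u hu0.le)

lemma gamma_half_int : IntegrableOn (fun u : ℝ => u ^ (-(1:ℝ)/2) * Real.exp (-u)) (Ioi 0) := by
  have := Real.GammaIntegral_convergent (by norm_num : (0:ℝ) < 1/2)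
  refine this.congr_fun (fun u hu => ?_) measurableSet_Ioi
  rw [mul_comm]
  norm_num

lemma gamma_half_val : ∫ u in Ioi (0:ℝ), u ^ (-(1:ℝ)/2) * Real.exp (-u) = Real.sqrt π := by
  rw [← Real.Gamma_one_half_eq, Real.Gamma_eq_integral (by norm_num : (0:ℝ) < 1/2)]
  refine setIntegral_congr_fun measurableSet_Ioi (fun u hu => ?_)
  rw [mul_comm]
  norm_num

lemma oneD_val : ∫ u in Ioi (0:ℝ), u ^ (-(3:ℝ)/2) * (1 - Real.exp (-u)) = 2 * Real.sqrt π := by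
  set F : ℝ → ℝ := fun u => -2 * u ^ (-(1:ℝ)/2) * (1 - Real.exp (-u)) with hF
  set f' : ℝ → ℝ := fun u =>
    u ^ (-(3:ℝ)/2) * (1 - Real.exp (-u)) - 2 * (u ^ (-(1:ℝ)/2) * Real.exp (-u)) with hf'
  have hderiv : ∀ u ∈ Ioi (0:ℝ), HasDerivAt F (f' u) u := by
    intro u hu
    have hu0 : 0 < u := hu
    have h1 : HasDerivAt (fun u : ℝ => u ^ (-(1:ℝ)/2)) ((-(1:ℝ)/2) * u ^ (-(1:ℝ)/2 - 1)) u :=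
      Real.hasDerivAt_rpow_const (Or.inl hu0.ne')
    have h2 : HasDerivAt (fun u : ℝ => 1 - Real.exp (-u)) (Real.exp (-u)) u := by
      have := ((Real.hasDerivAt_exp (-u)).comp u (hasDerivAt_neg u)).const_sub 1
      simpa using this
    have h3 : HasDerivAt F (-2 * ((-(1:ℝ)/2) * u ^ (-(1:ℝ)/2 - 1)) * (1 - Real.exp (-u))
        + -2 * u ^ (-(1:ℝ)/2) * Real.exp (-u)) u := ((h1.const_mul (-2 : ℝ)).mul h2)
    convert h3 using 1
    have e1 : u ^ (-(1:ℝ)/2 - 1) = u ^ (-(3:ℝ)/2) := by norm_num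
    have e2 : u ^ (-(3:ℝ)/2) * u = u ^ (-(1:ℝ)/2) := by
      rw [← Real.rpow_add_one hu0.ne']; norm_num
    show f' u = _
    rw [hf']
    simp only [e1]
    ring
  have hf'int : IntegrableOn f' (Ioi 0) := by
    exact oneD_int.sub (gamma_half_int.const_mul 2)
  have hcont : ContinuousWithinAt F (Ici 0) 0 := by
    rw [ContinuousWithinAt]
    have hF0 : F 0 = 0 := by simp [hF]
    rw [hF0]
    have hb : ∀ u ∈ Ioi (0:ℝ), ‖F u‖ ≤ 2 * u ^ ((1:ℝ)/2) := by
      intro u hu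
      have hu0 : (0:ℝ) < u := hu
      have h1 : 1 - Real.exp (-u) ≤ u := one_sub_exp_neg_le u hu0.le
      have h2 : 0 ≤ 1 - Real.exp (-u) := one_sub_exp_neg_nonneg u hu0.le
      have h3 : (0:ℝ) < u ^ (-(1:ℝ)/2) := Real.rpow_pos_of_pos hu0 _
      rw [hF]
      simp only [Real.norm_eq_abs]
      rw [show -2 * u ^ (-(1:ℝ)/2) * (1 - Real.exp (-u))
          = -(2 * (u ^ (-(1:ℝ)/2) * (1 - Real.exp (-u)))) by ring, abs_neg,
        abs_of_nonneg (by positivity)]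
      have : u ^ (-(1:ℝ)/2) * (1 - Real.exp (-u)) ≤ u ^ (-(1:ℝ)/2) * u := by nlinarith
      have e2 : u ^ (-(1:ℝ)/2) * u = u ^ ((1:ℝ)/2) := by
        rw [← Real.rpow_add_one hu0.ne']; norm_num
      nlinarith
    -- squeeze
    have ht : Filter.Tendsto (fun u : ℝ => 2 * u ^ ((1:ℝ)/2)) (nhdsWithin 0 (Ici 0)) (nhds 0) := by
      have : Filter.Tendsto (fun u : ℝ => u ^ ((1:ℝ)/2)) (nhdsWithin 0 (Ici 0)) (nhds 0) := by
        have hc : ContinuousWithinAt (fun u : ℝ => u ^ ((1:ℝ)/2)) (Ici 0) 0 :=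
          (Real.continuousAt_rpow_const 0 _ (by norm_num)).continuousWithinAt
        have := hc.tendsto
        simpa [ContinuousWithinAt, Real.zero_rpow (by norm_num : (1:ℝ)/2 ≠ 0)] using hc
      simpa using this.const_mul 2
    refine squeeze_zero_norm' ?_ ht
    filter_upwards [self_mem_nhdsWithin] with u hu
    rcases eq_or_lt_of_le (show (0:ℝ) ≤ u from hu) with h | h
    · simp [hF, ← h]
    · exact hb u h
  have htop : Filter.Tendsto F Filter.atTop (nhds 0) := by
    have hb : ∀ u ∈ Ioi (0:ℝ), ‖F u‖ ≤ 2 * u ^ (-(1:ℝ)/2) := by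
      intro u hu
      have hu0 : (0:ℝ) < u := hu
      have h2 : 0 ≤ 1 - Real.exp (-u) := one_sub_exp_neg_nonneg u hu0.le
      have h1 : 1 - Real.exp (-u) ≤ 1 := by linarith [Real.exp_pos (-u)]
      have h3 : (0:ℝ) < u ^ (-(1:ℝ)/2) := Real.rpow_pos_of_pos hu0 _
      rw [hF]
      simp only [Real.norm_eq_abs]
      rw [show -2 * u ^ (-(1:ℝ)/2) * (1 - Real.exp (-u))
          = -(2 * (u ^ (-(1:ℝ)/2) * (1 - Real.exp (-u)))) by ring, abs_neg,
        abs_of_nonneg (by positivity)]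
      nlinarith
    have ht : Filter.Tendsto (fun u : ℝ => 2 * u ^ (-(1:ℝ)/2)) Filter.atTop (nhds 0) := by
      have := (tendsto_rpow_neg_atTop (by norm_num : (0:ℝ) < 1/2)).const_mul (2:ℝ)
      simpa [neg_div] using this
    refine squeeze_zero_norm' ?_ ht
    filter_upwards [Filter.eventually_gt_atTop 0] with u hu
    exact hb u hu
  have key := integral_Ioi_of_hasDerivAt_of_tendsto hcont hderiv hf'int htop
  have hF0 : F 0 = 0 := by simp [hF]
  rw [hF0, sub_zero] at key
  have split : ∫ u in Ioi (0:ℝ), f' u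
      = (∫ u in Ioi (0:ℝ), u ^ (-(3:ℝ)/2) * (1 - Real.exp (-u)))
        - 2 * ∫ u in Ioi (0:ℝ), u ^ (-(1:ℝ)/2) * Real.exp (-u) := by
    rw [hf', integral_sub oneD_int (gamma_half_int.const_mul 2), MeasureTheory.integral_const_mul]
  rw [key] at split
  rw [gamma_half_val] at split
  linarith

lemma K_meas (a : ℝ) : Measurable (fun t : ℝ => t ^ (-(1:ℝ)/2) * (1 - Real.exp (-(a/t)))) := by
  fun_prop

lemma K_int {a : ℝ} (ha : 0 < a) :
    IntegrableOn (fun t : ℝ => t ^ (-(1:ℝ)/2) * (1 - Real.exp (-(a/t)))) (Ioi 0) := by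
  rw [← Ioc_union_Ioi_eq_Ioi (zero_le_one : (0:ℝ) ≤ 1), integrableOn_union]
  have hnn : ∀ t : ℝ, 0 < t → 0 ≤ t ^ (-(1:ℝ)/2) * (1 - Real.exp (-(a/t))) := by
    intro t ht
    exact mul_nonneg (Real.rpow_pos_of_pos ht _).le
      (one_sub_exp_neg_nonneg _ (by positivity))
  constructor
  · refine Integrable.mono (g := fun u : ℝ => u ^ (-(1:ℝ)/2)) ?_
      (K_meas a).aestronglyMeasurable.restrict ?_
    · exact (integrableOn_Ioc_iff_integrableOn_Ioo (f := fun u : ℝ => u ^ (-(1:ℝ)/2))).mpr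
        ((intervalIntegral.integrableOn_Ioo_rpow_iff zero_lt_one).mpr (by norm_num))
    · filter_upwards [ae_restrict_mem measurableSet_Ioc] with t ht
      have ht0 : 0 < t := ht.1
      rw [Real.norm_eq_abs, Real.norm_eq_abs, abs_of_nonneg (hnn t ht0),
        abs_of_nonneg (Real.rpow_pos_of_pos ht0 _).le]
      have h1 : 1 - Real.exp (-(a/t)) ≤ 1 := by linarith [Real.exp_pos (-(a/t))]
      nlinarith [Real.rpow_pos_of_pos ht0 (-(1:ℝ)/2),
        one_sub_exp_neg_nonneg (a/t) (by positivity)]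
  · refine Integrable.mono (g := fun u : ℝ => a * u ^ (-(3:ℝ)/2)) ?_
      (K_meas a).aestronglyMeasurable.restrict ?_
    · exact (integrableOn_Ioi_rpow_of_lt (by norm_num) zero_lt_one).const_mul a
    · filter_upwards [ae_restrict_mem measurableSet_Ioi] with t ht
      have ht0 : (0:ℝ) < t := lt_trans zero_lt_one ht
      rw [Real.norm_eq_abs, Real.norm_eq_abs, abs_of_nonneg (hnn t ht0),
        abs_of_nonneg (by positivity : (0:ℝ) ≤ a * t ^ (-(3:ℝ)/2))]
      have h1 : 1 - Real.exp (-(a/t)) ≤ a/t := one_sub_exp_neg_le _ (by positivity)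
      have e2 : t ^ (-(1:ℝ)/2) * (a / t) = a * t ^ (-(3:ℝ)/2) := by
        rw [show t ^ (-(3:ℝ)/2) = t ^ (-(1:ℝ)/2 + (-1:ℝ)) by norm_num,
          Real.rpow_add ht0, Real.rpow_neg_one]
        field_simp
      nlinarith [Real.rpow_pos_of_pos ht0 (-(1:ℝ)/2),
        one_sub_exp_neg_nonneg (a/t) (by positivity)]

lemma K_val {a : ℝ} (ha : 0 < a) :
    ∫ t in Ioi (0:ℝ), t ^ (-(1:ℝ)/2) * (1 - Real.exp (-(a/t)))
      = 2 * Real.sqrt π * Real.sqrt a := by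
  -- first: scaling t = a * τ
  have h1 : ∫ t in Ioi (0:ℝ), t ^ (-(1:ℝ)/2) * (1 - Real.exp (-(a/t)))
      = a ^ ((1:ℝ)/2) * ∫ τ in Ioi (0:ℝ), τ ^ (-(1:ℝ)/2) * (1 - Real.exp (-(1/τ))) := by
    have hs := integral_comp_mul_left_Ioi
      (fun t : ℝ => t ^ (-(1:ℝ)/2) * (1 - Real.exp (-(a/t)))) 0 ha
    rw [mul_zero, smul_eq_mul] at hs
    have e0 : ∫ t in Ioi (0:ℝ), t ^ (-(1:ℝ)/2) * (1 - Real.exp (-(a/t)))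
        = a * ∫ x in Ioi (0:ℝ),
            (fun t : ℝ => t ^ (-(1:ℝ)/2) * (1 - Real.exp (-(a/t)))) (a * x) := by
      rw [hs]; field_simp
    rw [e0]
    have e1 : ∫ x in Ioi (0:ℝ),
        (fun t : ℝ => t ^ (-(1:ℝ)/2) * (1 - Real.exp (-(a/t)))) (a * x)
        = ∫ x in Ioi (0:ℝ),
            a ^ (-(1:ℝ)/2) * (x ^ (-(1:ℝ)/2) * (1 - Real.exp (-(1/x)))) := by
      refine setIntegral_congr_fun measurableSet_Ioi (fun τ hτ => ?_)
      have hτ0 : (0:ℝ) < τ := hτ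
      simp only
      rw [Real.mul_rpow ha.le hτ0.le, show a / (a * τ) = 1 / τ by field_simp]
      ring
    rw [e1, MeasureTheory.integral_const_mul, ← mul_assoc]
    congr 1
    rw [show a * a ^ (-(1:ℝ)/2) = a ^ (1:ℝ) * a ^ (-(1:ℝ)/2) by rw [Real.rpow_one],
      ← Real.rpow_add ha]
    norm_num
  have h2 : ∫ τ in Ioi (0:ℝ), τ ^ (-(1:ℝ)/2) * (1 - Real.exp (-(1/τ)))
      = ∫ u in Ioi (0:ℝ), u ^ (-(3:ℝ)/2) * (1 - Real.exp (-u)) := by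
    have hs := integral_comp_rpow_Ioi
      (fun τ : ℝ => τ ^ (-(1:ℝ)/2) * (1 - Real.exp (-(1/τ)))) (p := (-1:ℝ)) (by norm_num)
    rw [← hs]
    refine setIntegral_congr_fun measurableSet_Ioi (fun u hu => ?_)
    have hu0 : (0:ℝ) < u := hu
    simp only [smul_eq_mul]
    have e1 : (u ^ (-1:ℝ)) ^ (-(1:ℝ)/2) = u ^ ((1:ℝ)/2) := by
      rw [← Real.rpow_mul hu0.le]; norm_num
    have e2 : (1:ℝ)/(u ^ (-1:ℝ)) = u := by
      rw [Real.rpow_neg_one]; field_simp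
    rw [e1, e2, show |(-1:ℝ)| = 1 by norm_num, one_mul,
      show (-1:ℝ) - 1 = -2 by norm_num,
      show (-(3:ℝ)/2) = (-2:ℝ) + (1:ℝ)/2 by norm_num, Real.rpow_add hu0]
    ring
  rw [h1, h2, oneD_val, Real.sqrt_eq_rpow, Real.sqrt_eq_rpow]
  ring

end Main


section Main2
variable {q : ℕ}
local notation "E" => EuclideanSpace ℝ (Fin q)

lemma cos_term_nonneg (x s : EuclideanSpace ℝ (Fin q)) :
    0 ≤ 1 - Real.cos (inner ℝ s x) := by
  linarith [Real.cos_le_one (inner (𝕜 := ℝ) s x)]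

lemma wstar_nonneg (s : EuclideanSpace ℝ (Fin q)) : 0 ≤ wstar q s := by
  rw [wstar]
  positivity

lemma wstar_meas : Measurable (fun s : E => (1 - Real.cos (inner ℝ s x)) * wstar q s) := by
  have h1 : Continuous (fun s : E => 1 - Real.cos (inner ℝ s x)) :=
    continuous_const.sub (Real.continuous_cos.comp (continuous_id.inner continuous_const))
  refine h1.measurable.mul ?_
  unfold wstar
  simp_rw [one_div]
  exact ((continuous_const.mul ((continuous_norm.pow (1 + q)))).measurable).inv

lemma main_ne (x : EuclideanSpace ℝ (Fin q)) (hx : x ≠ 0) :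
    Integrable (fun s : E => (1 - Real.cos (inner ℝ s x)) * wstar q s) volume ∧
    (∫ s : E, (1 - Real.cos (inner ℝ s x)) * wstar q s) = ‖x‖ := by
  haveI : Nontrivial (EuclideanSpace ℝ (Fin q)) := nontrivial_of_ne x 0 hx
  set k : ℝ := (1 + (q:ℝ))/2 with hk
  have hk0 : 0 < k := by positivity
  have hΓ : 0 < Real.Gamma k := Real.Gamma_pos_of_pos hk0
  set c : ℝ := Real.pi ^ k / Real.Gamma k with hcdef
  have hc : 0 < c := by positivity
  set a : ℝ := ‖x‖^2/4 with hadef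
  have ha : 0 < a := by
    have := norm_pos_iff.mpr hx
    positivity
  set C : ℝ≥0∞ := ENNReal.ofReal (c⁻¹ * (Real.Gamma k)⁻¹) with hC
  set F : E → ℝ → ℝ≥0∞ := fun s t => ENNReal.ofReal
    ((1 - Real.cos (inner ℝ s x)) * (t ^ (k-1) * Real.exp (-t * ‖s‖^2))) with hFdef
  have hnn : ∀ s : E, 0 ≤ (1 - Real.cos (inner ℝ s x)) * wstar q s :=
    fun s => mul_nonneg (cos_term_nonneg x s) (wstar_nonneg s)
  -- a.e. identity
  have h_ae : (fun s : E => ENNReal.ofReal ((1 - Real.cos (inner ℝ s x)) * wstar q s))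
      =ᵐ[volume] (fun s : E => C * ∫⁻ t in Ioi 0, F s t) := by
    have h0 : (volume : Measure (EuclideanSpace ℝ (Fin q))) {0} = 0 := measure_singleton 0
    filter_upwards [compl_mem_ae_iff.mpr h0] with s hs
    have hs0 : s ≠ 0 := hs
    have hb : (0:ℝ) < ‖s‖^2 := by
      have := norm_pos_iff.mpr hs0
      positivity
    have hGam : ∫ t in Ioi (0:ℝ), t ^ (k-1) * Real.exp (-t * ‖s‖^2)
        = (1/(‖s‖^2))^k * Real.Gamma k := by
      rw [← integral_rpow_mul_exp_neg_mul_Ioi hk0 hb]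
      refine setIntegral_congr_fun measurableSet_Ioi (fun t ht => ?_)
      ring_nf
    have hpow : ((‖s‖:ℝ)^2) ^ k = ‖s‖ ^ (1 + q) := by
      rw [← Real.rpow_natCast ‖s‖ 2, ← Real.rpow_mul (norm_nonneg s),
        ← Real.rpow_natCast ‖s‖ (1 + q)]
      congr 1
      push_cast [hk]
      ring
    have hP : (0:ℝ) < ‖s‖ ^ (1 + q) := by rw [← hpow]; positivity
    have hw : wstar q s = c⁻¹ * (Real.Gamma k)⁻¹ * ((1/(‖s‖^2))^k * Real.Gamma k) := by
      have e : ((1:ℝ)/(‖s‖^2))^k = (‖s‖ ^ (1 + q))⁻¹ := by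
        rw [one_div, Real.inv_rpow (by positivity), hpow]
      rw [wstar, ← hk, ← hcdef, e, one_div, mul_inv]
      field_simp
    have hsint : IntegrableOn (fun t : ℝ =>
        (1 - Real.cos (inner ℝ s x)) * (t ^ (k-1) * Real.exp (-t * ‖s‖^2))) (Ioi 0) := by
      have base : IntegrableOn (fun t : ℝ => t ^ (k-1) * Real.exp (-(‖s‖^2) * t ^ (1:ℝ))) (Ioi 0) :=
        integrableOn_rpow_mul_exp_neg_mul_rpow (by linarith) zero_lt_one hb
      refine IntegrableOn.congr_fun
        (base.const_mul (1 - Real.cos (inner ℝ s x))) (fun t ht => ?_) measurableSet_Ioi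
      simp only [Real.rpow_one]
      ring_nf
    have key : (1 - Real.cos (inner ℝ s x)) * wstar q s
        = c⁻¹ * (Real.Gamma k)⁻¹ * ∫ t in Ioi 0,
            (1 - Real.cos (inner ℝ s x)) * (t ^ (k-1) * Real.exp (-t * ‖s‖^2)) := by
      rw [MeasureTheory.integral_const_mul, hGam, hw]
      ring
    rw [key, ENNReal.ofReal_mul (by positivity),
      ofReal_integral_eq_lintegral_ofReal hsint ?_]
    filter_upwards [ae_restrict_mem measurableSet_Ioi] with t ht
    have ht0 : (0:ℝ) < t := ht
    exact mul_nonneg (cos_term_nonneg x s) (by positivity)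
  -- product measurability
  have hFmeas : AEMeasurable (fun p : E × ℝ => F p.1 p.2)
      ((volume : Measure E).prod ((volume : Measure ℝ).restrict (Ioi 0))) := by
    refine Measurable.aemeasurable (Measurable.ennreal_ofReal ?_)
    have m1 : Measurable (fun p : E × ℝ => 1 - Real.cos (inner ℝ p.1 x)) :=
      (continuous_const.sub (Real.continuous_cos.comp
        ((continuous_fst.inner continuous_const)))).measurable
    have m2 : Measurable (fun p : E × ℝ => p.2 ^ (k-1)) := by fun_prop
    have m3 : Measurable (fun p : E × ℝ => Real.exp (-p.2 * ‖p.1‖^2)) :=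
      (Real.continuous_exp.comp ((continuous_snd.neg.mul
        ((continuous_norm.comp continuous_fst).pow 2)))).measurable
    exact m1.mul (m2.mul m3)
  -- main lintegral computation
  have hL : ∫⁻ s : E, ENNReal.ofReal ((1 - Real.cos (inner ℝ s x)) * wstar q s)
      = ENNReal.ofReal ‖x‖ := by
    calc ∫⁻ s : E, ENNReal.ofReal ((1 - Real.cos (inner ℝ s x)) * wstar q s)
        = ∫⁻ s : E, C * ∫⁻ t in Ioi 0, F s t := lintegral_congr_ae h_ae
      _ = C * ∫⁻ s : E, ∫⁻ t in Ioi 0, F s t :=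
          lintegral_const_mul' C _ ENNReal.ofReal_ne_top
      _ = C * ∫⁻ t in Ioi 0, ∫⁻ s : E, F s t := by rw [lintegral_lintegral_swap hFmeas]
      _ = C * ∫⁻ t in Ioi 0, ENNReal.ofReal
            (Real.pi ^ ((q:ℝ)/2) * (t ^ (-(1:ℝ)/2) * (1 - Real.exp (-(a/t))))) := by
          congr 1
          refine lintegral_congr_ae ?_
          filter_upwards [ae_restrict_mem measurableSet_Ioi] with t ht
          have ht0 : (0:ℝ) < t := ht
          have step1 : ∫⁻ s : E, F s t = ENNReal.ofReal (t ^ (k-1)) *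
              ∫⁻ s : E, ENNReal.ofReal
                ((1 - Real.cos (inner ℝ s x)) * Real.exp (-t * ‖s‖^2)) := by
            rw [← lintegral_const_mul' _ _ ENNReal.ofReal_ne_top]
            refine lintegral_congr (fun s => ?_)
            rw [hFdef]
            rw [← ENNReal.ofReal_mul (by positivity)]
            congr 1
            ring
          rw [step1,
            ← ofReal_integral_eq_lintegral_ofReal (gauss_int t ht0 x) ?_, gauss_full t ht0 x,
            ← ENNReal.ofReal_mul (by positivity)]
          · congr 1
            have e1 : (Real.pi / t) ^ ((q:ℝ)/2) = Real.pi ^ ((q:ℝ)/2) / t ^ ((q:ℝ)/2) :=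
              Real.div_rpow Real.pi_pos.le ht0.le _
            have e2 : t ^ (k-1) / t ^ ((q:ℝ)/2) = t ^ (-(1:ℝ)/2) := by
              rw [← Real.rpow_sub ht0]
              congr 1
              rw [hk]; ring
            have e3 : -‖x‖^2/(4*t) = -(a/t) := by
              rw [hadef]; field_simp
            rw [e3, e1]
            rw [show t ^ (k-1) * (Real.pi ^ ((q:ℝ)/2) / t ^ ((q:ℝ)/2) * (1 - Real.exp (-(a/t))))
                = (t ^ (k-1) / t ^ ((q:ℝ)/2)) * Real.pi ^ ((q:ℝ)/2) * (1 - Real.exp (-(a/t)))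
              by ring, e2]
            ring
          · filter_upwards with s
            exact mul_nonneg (cos_term_nonneg x s) (by positivity)
      _ = C * ENNReal.ofReal (∫ t in Ioi 0,
            Real.pi ^ ((q:ℝ)/2) * (t ^ (-(1:ℝ)/2) * (1 - Real.exp (-(a/t))))) := by
          rw [ofReal_integral_eq_lintegral_ofReal ((K_int ha).const_mul _) ?_]
          filter_upwards [ae_restrict_mem measurableSet_Ioi] with t ht
          have ht0 : (0:ℝ) < t := ht
          exact mul_nonneg (by positivity)
            (mul_nonneg (by positivity) (one_sub_exp_neg_nonneg _ (by positivity)))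
      _ = ENNReal.ofReal ‖x‖ := by
          rw [MeasureTheory.integral_const_mul, K_val ha, hC,
            ← ENNReal.ofReal_mul (by positivity)]
          congr 1
          have hsq : Real.sqrt a = ‖x‖/2 := by
            rw [hadef, show ‖x‖^2/4 = (‖x‖/2)^2 by ring, Real.sqrt_sq (by positivity)]
          rw [hsq, Real.sqrt_eq_rpow]
          rw [show Real.pi ^ ((q:ℝ)/2) * (2 * Real.pi ^ ((1:ℝ)/2) * (‖x‖/2))
              = Real.pi ^ ((q:ℝ)/2) * Real.pi ^ ((1:ℝ)/2) * ‖x‖ by ring,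
            ← Real.rpow_add Real.pi_pos, show (q:ℝ)/2 + 1/2 = k by rw [hk]; ring, hcdef]
          field_simp
  -- conclude
  have hfin : HasFiniteIntegral
      (fun s : E => (1 - Real.cos (inner ℝ s x)) * wstar q s) volume := by
    rw [hasFiniteIntegral_iff_ofReal (Filter.Eventually.of_forall hnn), hL]
    exact ENNReal.ofReal_lt_top
  have hint : Integrable (fun s : E => (1 - Real.cos (inner ℝ s x)) * wstar q s) volume :=
    ⟨wstar_meas.aestronglyMeasurable, hfin⟩
  refine ⟨hint, ?_⟩
  rw [integral_eq_lintegral_of_nonneg_ae (Filter.Eventually.of_forall hnn)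
    wstar_meas.aestronglyMeasurable, hL, ENNReal.toReal_ofReal (norm_nonneg x)]

end Main2

/-- For every `x ∈ ℝ^q`, the function `s ↦ (1 − cos⟨s, x⟩) w_*(s)` is Lebesgue integrable on
`ℝ^q` and `∫_{ℝ^q} (1 − cos⟨s, x⟩) w_*(s) ds = ‖x‖`. -/
theorem statement0 (q : ℕ) (x : EuclideanSpace ℝ (Fin q)) :
    Integrable (fun s : EuclideanSpace ℝ (Fin q) =>
      (1 - Real.cos (inner ℝ s x)) * wstar q s) volume ∧
    (∫ s : EuclideanSpace ℝ (Fin q), (1 - Real.cos (inner ℝ s x)) * wstar q s) = ‖x‖ := by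
  by_cases hx : x = 0
  · subst hx
    have h0 : (fun s : EuclideanSpace ℝ (Fin q) =>
        (1 - Real.cos (inner ℝ s 0)) * wstar q s) = fun _ => (0:ℝ) := by
      ext s; simp
    rw [h0]
    simp
  · exact main_ne x hx
end

section
/- (Closed-form MDD estimator for the multiple linear model.) Fix n ≥ 1 and data z_{1,1}, …, z_{1,n} ∈ ℝ^l and z_{2,1}, …, z_{2,n} ∈ ℝ^{k−l}. For θ ∈ ℝ^{l(k−l)} identified with Γ ∈ ℝ^{l × (k−l)} via θ = vec(Γ), define MDD_n(θ) = −n^{−2} ∑_{t=1}^n ∑_{t'=1}^n (r_t(θ) − r̄(θ))ᵀ (r_{t'}(θ) − r̄(θ)) ‖z_{2,t} − z_{2,t'}‖ with r_t(θ) = z_{1,t} − Γ z_{2,t} and r̄(θ) = n^{−1} ∑_t r_t(θ). Let Ξ_{1n} = ∑_{t,t'} [I_l ⊗ z_{2,t}ᵀ − n^{−1} ∑_r (I_l ⊗ z_{2,r}ᵀ)]ᵀ [I_l ⊗ z_{2,t'}ᵀ − n^{−1} ∑_r (I_l ⊗ z_{2,r}ᵀ)] ‖z_{2,t} − z_{2,t'}‖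 and Ξ_{2n} = ∑_{t,t'} [I_l ⊗ z_{2,t}ᵀ − n^{−1} ∑_r (I_l ⊗ z_{2,r}ᵀ)]ᵀ (z_{1,t'} − n^{−1} ∑_r z_{1,r}) ‖z_{2,t} − z_{2,t'}‖. If Ξ_{1n} is invertible, then θ̂ = Ξ_{1n}^{−1} Ξ_{2n} is a minimizer of MDD_n over ℝ^{l(k−l)}; moreover MDD_n is a convex quadratic function of θ and every minimizer satisfies Ξ_{1n} θ = Ξ_{2n}. -/
open Matrix

/-- `I_l ⊗ z_{2,t}ᵀ`, viewed as the `l × (l·(k−l))` matrix with entries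
`(i, (j, c)) ↦ δ_{ij} (z_{2,t})_c`, so that `Γ z_{2,t} = (I_l ⊗ z_{2,t}ᵀ) vec(Γ)` with
`vec(Γ) (j, c) = Γ_{jc}`. -/
noncomputable def Wmat (k l n : ℕ) (z2 : Fin n → EuclideanSpace ℝ (Fin (k - l)))
    (t : Fin n) : Matrix (Fin l) (Fin l × Fin (k - l)) ℝ :=
  Matrix.of fun i jc => if jc.1 = i then z2 t jc.2 else 0

/-- The centered matrix `I_l ⊗ z_{2,t}ᵀ − n^{-1} ∑_r (I_l ⊗ z_{2,r}ᵀ)`. -/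
noncomputable def Wc (k l n : ℕ) (z2 : Fin n → EuclideanSpace ℝ (Fin (k - l)))
    (t : Fin n) : Matrix (Fin l) (Fin l × Fin (k - l)) ℝ :=
  Wmat k l n z2 t - (n : ℝ)⁻¹ • ∑ r, Wmat k l n z2 r

/-- `Ξ_{1n} = ∑_{t,t'} [I_l ⊗ z_{2,t}ᵀ − n^{-1}∑_r (I_l ⊗ z_{2,r}ᵀ)]ᵀ
[I_l ⊗ z_{2,t'}ᵀ − n^{-1}∑_r (I_l ⊗ z_{2,r}ᵀ)] ‖z_{2,t} − z_{2,t'}‖`. -/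
noncomputable def Xi1 (k l n : ℕ) (z2 : Fin n → EuclideanSpace ℝ (Fin (k - l))) :
    Matrix (Fin l × Fin (k - l)) (Fin l × Fin (k - l)) ℝ :=
  ∑ t, ∑ t', ‖z2 t - z2 t'‖ • ((Wc k l n z2 t)ᵀ * Wc k l n z2 t')

/-- `Ξ_{2n} = ∑_{t,t'} [I_l ⊗ z_{2,t}ᵀ − n^{-1}∑_r (I_l ⊗ z_{2,r}ᵀ)]ᵀ
(z_{1,t'} − n^{-1} ∑_r z_{1,r}) ‖z_{2,t} − z_{2,t'}‖`. -/
noncomputable def Xi2 (k l n : ℕ) (z1 : Fin n → EuclideanSpace ℝ (Fin l))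
    (z2 : Fin n → EuclideanSpace ℝ (Fin (k - l))) : (Fin l × Fin (k - l)) → ℝ :=
  ∑ t, ∑ t', ‖z2 t - z2 t'‖ •
    ((Wc k l n z2 t)ᵀ.mulVec fun i => z1 t' i - (n : ℝ)⁻¹ * ∑ r, z1 r i)

/-- The residual `r_t(θ) = z_{1,t} − Γ z_{2,t}`, where `θ = vec(Γ)` via `θ (i, c) = Γ_{ic}`. -/
noncomputable def resid (k l n : ℕ) (z1 : Fin n → EuclideanSpace ℝ (Fin l))
    (z2 : Fin n → EuclideanSpace ℝ (Fin (k - l)))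
    (θ : Fin l × Fin (k - l) → ℝ) (t : Fin n) (i : Fin l) : ℝ :=
  z1 t i - ∑ c, θ (i, c) * z2 t c

/-- The sample criterion
`MDD_n(θ) = −n^{-2} ∑_{t,t'} (r_t(θ) − r̄(θ))ᵀ (r_{t'}(θ) − r̄(θ)) ‖z_{2,t} − z_{2,t'}‖` for
the multiple linear model. -/
noncomputable def MDDlin (k l n : ℕ) (z1 : Fin n → EuclideanSpace ℝ (Fin l))
    (z2 : Fin n → EuclideanSpace ℝ (Fin (k - l)))
    (θ : Fin l × Fin (k - l) → ℝ) : ℝ :=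
  -((n : ℝ) ^ 2)⁻¹ * ∑ t, ∑ t',
    (∑ i, (resid k l n z1 z2 θ t i - (n : ℝ)⁻¹ * ∑ r, resid k l n z1 z2 θ r i) *
      (resid k l n z1 z2 θ t' i - (n : ℝ)⁻¹ * ∑ r, resid k l n z1 z2 θ r i)) *
    ‖z2 t - z2 t'‖



open MeasureTheory Finset RealInnerProductSpace Matrix

set_option linter.unusedSectionVars false


lemma sum_quad_eq {n : ℕ} (c g : Fin n → ℝ) (hc : ∑ t, c t = 0) :
    ∑ t, ∑ t', c t * c t' * (g t - g t') ^ 2 = -2 * (∑ t, c t * g t) ^ 2 := by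
  have key : ∀ t : Fin n, ∑ t', c t * c t' * (g t - g t') ^ 2
      = c t * g t ^ 2 * (∑ t', c t') + c t * (∑ t', c t' * g t' ^ 2)
        - 2 * (c t * g t) * (∑ t', c t' * g t') := by
    intro t
    rw [Finset.sum_congr rfl fun t' (_ : t' ∈ univ) =>
      (by ring : c t * c t' * (g t - g t') ^ 2
        = c t * g t ^ 2 * c t' + c t * (c t' * g t' ^ 2) - 2 * (c t * g t) * (c t' * g t')),
      Finset.sum_sub_distrib, Finset.sum_add_distrib, ← Finset.mul_sum, ← Finset.mul_sum,
      ← Finset.mul_sum]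
  rw [Finset.sum_congr rfl fun t (_ : t ∈ univ) => key t]
  simp only [hc, mul_zero, zero_add]
  rw [Finset.sum_sub_distrib, ← Finset.sum_mul, ← Finset.sum_mul, hc, zero_mul, zero_sub]
  have h2 : ∑ t, 2 * (c t * g t) = 2 * ∑ t, c t * g t := by rw [← Finset.mul_sum]
  rw [h2]; ring

lemma cnd_one {n : ℕ} (a c : Fin n → ℝ) (hc : ∑ t, c t = 0) :
    ∑ t, ∑ t', c t * c t' * |a t - a t'| ≤ 0 := by
  classical
  set f : Fin n → ℝ → ℝ := fun t => Set.indicator (Set.Iic (a t)) (fun _ => 1) with hf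
  have hsq : ∀ t t' : Fin n, (fun x => (f t x - f t' x) ^ 2)
      = Set.indicator (Set.Ioc (min (a t) (a t')) (max (a t) (a t'))) (fun _ => (1:ℝ)) := by
    intro t t'
    funext x
    simp only [hf, Set.indicator_apply, Set.mem_Iic, Set.mem_Ioc]
    by_cases h1 : x ≤ a t <;> by_cases h2 : x ≤ a t'
    · rw [if_pos h1, if_pos h2, if_neg (fun hx => absurd hx.1 (not_lt.2 (le_min h1 h2)))]
      norm_num
    · rw [if_pos h1, if_neg h2,
        if_pos ⟨(min_le_right _ _).trans_lt (lt_of_not_ge h2), h1.trans (le_max_left _ _)⟩]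
      norm_num
    · rw [if_neg h1, if_pos h2,
        if_pos ⟨(min_le_left _ _).trans_lt (lt_of_not_ge h1), h2.trans (le_max_right _ _)⟩]
      norm_num
    · rw [if_neg h1, if_neg h2,
        if_neg (fun hx => absurd hx.2 (not_le.2 (max_lt (lt_of_not_ge h1) (lt_of_not_ge h2))))]
      norm_num
  have hint : ∀ t t' : Fin n, Integrable (fun x => (f t x - f t' x) ^ 2) volume := by
    intro t t'
    rw [hsq t t']
    rw [integrable_indicator_iff measurableSet_Ioc]
    exact integrableOn_const measure_Ioc_lt_top.ne
  have hval : ∀ t t' : Fin n, ∫ x, (f t x - f t' x) ^ 2 = |a t - a t'| := by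
    intro t t'
    rw [hsq t t', integral_indicator_const _ measurableSet_Ioc, measureReal_def, Real.volume_Ioc,
      ENNReal.toReal_ofReal (by simp [min_le_max] : (0:ℝ) ≤ max (a t) (a t') - min (a t) (a t'))]
    rw [max_sub_min_eq_abs]
    simp [abs_sub_comm]
  have step : ∀ t t' : Fin n, c t * c t' * |a t - a t'|
      = ∫ x, c t * c t' * (f t x - f t' x) ^ 2 := by
    intro t t'
    rw [integral_const_mul, hval]
  calc ∑ t, ∑ t', c t * c t' * |a t - a t'|
      = ∑ t, ∑ t', ∫ x, c t * c t' * (f t x - f t' x) ^ 2 := by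
        exact Finset.sum_congr rfl fun t _ => Finset.sum_congr rfl fun t' _ => step t t'
    _ = ∫ x, ∑ t, ∑ t', c t * c t' * (f t x - f t' x) ^ 2 := by
        have inner : ∀ t : Fin n, ∑ t', ∫ x, c t * c t' * (f t x - f t' x) ^ 2
            = ∫ x, ∑ t', c t * c t' * (f t x - f t' x) ^ 2 := fun t =>
          (integral_finset_sum _ fun t' _ => (hint t t').const_mul _).symm
        rw [Finset.sum_congr rfl fun t (_ : t ∈ univ) => inner t]
        exact (integral_finset_sum _ fun t _ =>
          integrable_finset_sum _ fun t' _ => (hint t t').const_mul _).symm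
    _ ≤ 0 := by
        apply integral_nonpos
        intro x
        show (∑ t, ∑ t', c t * c t' * (f t x - f t' x) ^ 2) ≤ (0:ℝ)
        rw [sum_quad_eq c (fun t => f t x) hc]
        nlinarith [sq_nonneg (∑ t, c t * f t x)]


section euclid

variable {m : ℕ}

local notation "E" => EuclideanSpace ℝ (Fin (m + 1))

noncomputable def e0 (m : ℕ) : EuclideanSpace ℝ (Fin (m + 1)) :=
  EuclideanSpace.single 0 (1 : ℝ)

noncomputable def kappa (m : ℕ) : ℝ :=
  ∫ u in Metric.closedBall (0 : EuclideanSpace ℝ (Fin (m + 1))) 1, |⟪e0 m, u⟫|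

lemma integrableOn_inner_cb (v : E) :
    IntegrableOn (fun u : E => |⟪v, u⟫|) (Metric.closedBall 0 1) volume :=
  ((innerSL ℝ v).continuous.abs).continuousOn.integrableOn_compact
    (isCompact_closedBall 0 1)

lemma kappa_pos : 0 < kappa m := by
  rw [kappa]
  rw [setIntegral_pos_iff_support_of_nonneg_ae
    (Filter.Eventually.of_forall fun u => abs_nonneg _) (integrableOn_inner_cb (e0 m))]
  -- show 0 < volume (support ∩ closedBall)
  set K : Submodule ℝ (EuclideanSpace ℝ (Fin (m + 1))) :=
    LinearMap.ker ((innerSL ℝ (e0 m)) : _ →L[ℝ] ℝ).toLinearMap with hK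
  have hKtop : K ≠ ⊤ := by
    intro h
    have he0 : (e0 m) ∈ K := h ▸ Submodule.mem_top
    have h0 : ⟪e0 m, e0 m⟫ = 0 := he0
    have hn : ‖e0 m‖ = 1 := by rw [e0, EuclideanSpace.norm_single]; norm_num
    rw [real_inner_self_eq_norm_sq, hn] at h0
    norm_num at h0
  have hK0 : volume (K : Set (EuclideanSpace ℝ (Fin (m + 1)))) = 0 :=
    Measure.addHaar_submodule _ _ hKtop
  have hsub : Metric.ball (0 : EuclideanSpace ℝ (Fin (m + 1))) 1 \ K ⊆
      (Function.support fun u => |⟪e0 m, u⟫|) ∩ Metric.closedBall 0 1 := by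
    rintro u ⟨hu1, hu2⟩
    refine ⟨?_, Metric.ball_subset_closedBall hu1⟩
    simp only [Function.mem_support, ne_eq, abs_eq_zero]
    exact fun h => hu2 h
  calc (0 : ENNReal) < volume (Metric.ball (0 : EuclideanSpace ℝ (Fin (m + 1))) 1) :=
        Metric.measure_ball_pos _ _ one_pos
    _ = volume (Metric.ball (0 : EuclideanSpace ℝ (Fin (m + 1))) 1 \ K) :=
        (measure_diff_null hK0).symm
    _ ≤ _ := measure_mono hsub

lemma integral_inner_cb (v : E) :
    ∫ u in Metric.closedBall (0 : E) 1, |⟪v, u⟫| = ‖v‖ * kappa m := by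
  rcases eq_or_ne v 0 with rfl | hv
  · simp
  · set x : E := ‖v‖ • e0 m with hx
    have hnorm : ‖x‖ = ‖v‖ := by
      rw [hx, norm_smul]
      have : ‖e0 m‖ = 1 := by rw [e0, EuclideanSpace.norm_single]; norm_num
      simp [this, abs_of_nonneg (norm_nonneg v)]
    set R : E ≃ₗᵢ[ℝ] E := Submodule.reflection (ℝ ∙ (x - v))ᗮ with hRdef
    have hR : R x = v := Submodule.reflection_sub hnorm
    have hinner : ∀ u : E, ⟪v, u⟫ = ⟪x, R.symm u⟫ := by
      intro u
      conv_lhs => rw [← hR, ← R.apply_symm_apply u, R.inner_map_map]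
    have hpre : (⇑(R.symm) : E → E) ⁻¹' Metric.closedBall 0 1 = Metric.closedBall 0 1 := by
      ext u
      simp [Metric.mem_closedBall, dist_zero_right, R.symm.norm_map]
    have hmp : MeasurePreserving (⇑(R.symm) : E → E) volume volume :=
      R.symm.measurePreserving
    have hemb : MeasurableEmbedding (⇑(R.symm) : E → E) :=
      R.symm.toHomeomorph.measurableEmbedding
    calc ∫ u in Metric.closedBall (0 : E) 1, |⟪v, u⟫|
        = ∫ u in Metric.closedBall (0 : E) 1, |⟪x, R.symm u⟫| := by
          simp_rw [hinner]
      _ = ∫ u in (⇑(R.symm) : E → E) ⁻¹' Metric.closedBall 0 1, |⟪x, R.symm u⟫| := by rw [hpre]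
      _ = ∫ w in Metric.closedBall (0 : E) 1, |⟪x, w⟫| :=
          hmp.setIntegral_preimage_emb hemb (fun w => |⟪x, w⟫|) (Metric.closedBall 0 1)
      _ = ‖v‖ * kappa m := by
          rw [kappa]
          rw [← integral_const_mul]
          congr 1
          funext w
          rw [hx]
          simp_rw [real_inner_smul_left, abs_mul, abs_of_nonneg (norm_nonneg v)]

end euclid

lemma cnd_euclid {n d : ℕ} (x : Fin n → EuclideanSpace ℝ (Fin d)) (c : Fin n → ℝ)
    (hc : ∑ t, c t = 0) : ∑ t, ∑ t', c t * c t' * ‖x t - x t'‖ ≤ 0 := by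
  cases d with
  | zero =>
    have h0 : ∀ t t' : Fin n, x t - x t' = 0 := fun t t' => Subsingleton.elim _ _
    simp [h0]
  | succ m =>
    have hκ := kappa_pos (m := m)
    have hrep : ∀ t t' : Fin n, ‖x t - x t'‖ = (kappa m)⁻¹ *
        ∫ u in Metric.closedBall (0 : EuclideanSpace ℝ (Fin (m+1))) 1, |⟪x t - x t', u⟫| := by
      intro t t'
      rw [integral_inner_cb]
      field_simp
    have hint : ∀ t t' : Fin n, IntegrableOn
        (fun u : EuclideanSpace ℝ (Fin (m+1)) => c t * c t' * |⟪x t - x t', u⟫|)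
        (Metric.closedBall 0 1) volume := fun t t' => (integrableOn_inner_cb _).const_mul _
    calc ∑ t, ∑ t', c t * c t' * ‖x t - x t'‖
        = ∑ t, ∑ t', (kappa m)⁻¹ * ∫ u in Metric.closedBall (0 : EuclideanSpace ℝ (Fin (m+1))) 1,
            c t * c t' * |⟪x t - x t', u⟫| := by
          refine Finset.sum_congr rfl fun t _ => Finset.sum_congr rfl fun t' _ => ?_
          rw [hrep t t', integral_const_mul]
          ring
      _ = (kappa m)⁻¹ * ∑ t, ∑ t', ∫ u in Metric.closedBall (0 : EuclideanSpace ℝ (Fin (m+1))) 1,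
            c t * c t' * |⟪x t - x t', u⟫| := by
          simp_rw [← Finset.mul_sum]
      _ = (kappa m)⁻¹ * ∫ u in Metric.closedBall (0 : EuclideanSpace ℝ (Fin (m+1))) 1,
            ∑ t, ∑ t', c t * c t' * |⟪x t - x t', u⟫| := by
          congr 1
          have inner : ∀ t : Fin n, ∑ t', (∫ u in Metric.closedBall
                (0 : EuclideanSpace ℝ (Fin (m+1))) 1, c t * c t' * |⟪x t - x t', u⟫|)
              = ∫ u in Metric.closedBall (0 : EuclideanSpace ℝ (Fin (m+1))) 1,
                ∑ t', c t * c t' * |⟪x t - x t', u⟫| := fun t =>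
            (integral_finset_sum _ fun t' _ => hint t t').symm
          rw [Finset.sum_congr rfl fun t (_ : t ∈ univ) => inner t]
          exact (integral_finset_sum _ fun t _ =>
            integrable_finset_sum _ fun t' _ => hint t t').symm
      _ ≤ 0 := by
          have h1 : (0:ℝ) ≤ (kappa m)⁻¹ := le_of_lt (inv_pos.2 hκ)
          have h2 : (∫ u in Metric.closedBall (0 : EuclideanSpace ℝ (Fin (m+1))) 1,
              ∑ t, ∑ t', c t * c t' * |⟪x t - x t', u⟫|) ≤ 0 := by
            apply integral_nonpos
            intro u
            show (∑ t, ∑ t', c t * c t' * |⟪x t - x t', u⟫|) ≤ (0:ℝ)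
            simp_rw [inner_sub_left]
            exact cnd_one (fun t => ⟪x t, u⟫) c hc
          nlinarith

variable {J : Type*} [Fintype J] [DecidableEq J]

/-- quadratic function -/
noncomputable def gQuad (Q : Matrix J J ℝ) (b : J → ℝ) (c : ℝ) (θ : J → ℝ) : ℝ :=
  θ ⬝ᵥ Q *ᵥ θ + b ⬝ᵥ θ + c

lemma dot_symm {Q : Matrix J J ℝ} (hsym : Qᵀ = Q) (x y : J → ℝ) :
    x ⬝ᵥ Q *ᵥ y = y ⬝ᵥ Q *ᵥ x := by
  rw [Matrix.dotProduct_mulVec, ← Matrix.mulVec_transpose, hsym, dotProduct_comm]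

lemma quad_expand (Q : Matrix J J ℝ) (hsym : Qᵀ = Q) (b : J → ℝ) (c : ℝ) (θ h : J → ℝ) :
    gQuad Q b c (θ + h) = gQuad Q b c θ + h ⬝ᵥ Q *ᵥ h + (2 • (Q *ᵥ θ) + b) ⬝ᵥ h := by
  simp only [gQuad, Matrix.mulVec_add, dotProduct_add, add_dotProduct,
    smul_dotProduct]
  have hx : θ ⬝ᵥ Q *ᵥ h = h ⬝ᵥ Q *ᵥ θ := dot_symm hsym θ h
  rw [hx]
  have : (Q *ᵥ θ) ⬝ᵥ h = h ⬝ᵥ (Q *ᵥ θ) := dotProduct_comm _ _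
  rw [this]
  ring_nf

lemma quad_min_of_crit {Q : Matrix J J ℝ} (hsym : Qᵀ = Q)
    (hpsd : ∀ v, 0 ≤ v ⬝ᵥ Q *ᵥ v) {b : J → ℝ} {c : ℝ} {θ₀ : J → ℝ}
    (hcrit : 2 • (Q *ᵥ θ₀) + b = 0) (θ : J → ℝ) :
    gQuad Q b c θ₀ ≤ gQuad Q b c θ := by
  have h := quad_expand Q hsym b c θ₀ (θ - θ₀)
  rw [add_sub_cancel, hcrit, zero_dotProduct, add_zero] at h
  rw [h]
  have := hpsd (θ - θ₀)
  linarith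

lemma quad_crit_of_min {Q : Matrix J J ℝ} (hsym : Qᵀ = Q)
    (hpsd : ∀ v, 0 ≤ v ⬝ᵥ Q *ᵥ v) {b : J → ℝ} {c : ℝ} {θ : J → ℝ}
    (hmin : ∀ θ', gQuad Q b c θ ≤ gQuad Q b c θ') :
    2 • (Q *ᵥ θ) + b = 0 := by
  have hdot : ∀ h : J → ℝ, (2 • (Q *ᵥ θ) + b) ⬝ᵥ h = 0 := by
    intro h
    set α := h ⬝ᵥ Q *ᵥ h with hα
    set δ := (2 • (Q *ᵥ θ) + b) ⬝ᵥ h with hδ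
    have hkey : ∀ s : ℝ, 0 ≤ s ^ 2 * α + s * δ := by
      intro s
      have h1 := hmin (θ + s • h)
      have h2 := quad_expand Q hsym b c θ (s • h)
      rw [h2] at h1
      have e1 : (s • h) ⬝ᵥ Q *ᵥ (s • h) = s ^ 2 * α := by
        rw [smul_dotProduct, Matrix.mulVec_smul, dotProduct_smul]
        simp [hα]; ring
      have e2 : (2 • (Q *ᵥ θ) + b) ⬝ᵥ (s • h) = s * δ := by
        rw [dotProduct_smul]; simp [hδ]
      rw [e1, e2] at h1
      linarith
    have hα0 : 0 ≤ α := hpsd h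
    have hpos : 0 < α + 1 := by linarith
    have him := hkey (-δ / (α + 1))
    have heq : ((-δ / (α + 1)) ^ 2 * α + (-δ / (α + 1)) * δ) * (α + 1) ^ 2 = -δ ^ 2 := by
      field_simp
      ring
    have h2 : (0:ℝ) < (α + 1) ^ 2 := by positivity
    have hδ2 : δ ^ 2 ≤ 0 := by nlinarith [mul_nonneg him h2.le]
    have hδ0 : δ ^ 2 = 0 := le_antisymm hδ2 (sq_nonneg δ)
    exact sq_eq_zero_iff.mp hδ0
  funext j
  have := hdot (Pi.single j 1)
  rw [dotProduct_single] at this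
  simpa using this

lemma quad_convexOn {Q : Matrix J J ℝ} (hsym : Qᵀ = Q)
    (hpsd : ∀ v, 0 ≤ v ⬝ᵥ Q *ᵥ v) (b : J → ℝ) (c : ℝ) :
    ConvexOn ℝ Set.univ (gQuad Q b c) := by
  refine ⟨convex_univ, fun x _ y _ p q hp hq hpq => ?_⟩
  have Bxy : x ⬝ᵥ Q *ᵥ y = y ⬝ᵥ Q *ᵥ x := dot_symm hsym x y
  have hdiff := hpsd (x - y)
  have hexp : (x - y) ⬝ᵥ Q *ᵥ (x - y)
      = x ⬝ᵥ Q *ᵥ x - 2 * (x ⬝ᵥ Q *ᵥ y) + y ⬝ᵥ Q *ᵥ y := by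
    rw [sub_dotProduct, Matrix.mulVec_sub, dotProduct_sub,
      dotProduct_sub, Bxy]
    ring
  simp only [smul_eq_mul, gQuad]
  have e1 : (p • x + q • y) ⬝ᵥ Q *ᵥ (p • x + q • y)
      = p ^ 2 * (x ⬝ᵥ Q *ᵥ x) + 2 * p * q * (x ⬝ᵥ Q *ᵥ y) + q ^ 2 * (y ⬝ᵥ Q *ᵥ y) := by
    simp only [add_dotProduct, dotProduct_add, Matrix.mulVec_add,
      Matrix.mulVec_smul, smul_dotProduct, dotProduct_smul, smul_eq_mul, Bxy]
    ring
  have e2 : b ⬝ᵥ (p • x + q • y) = p * (b ⬝ᵥ x) + q * (b ⬝ᵥ y) := by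
    rw [dotProduct_add, dotProduct_smul, dotProduct_smul]
    simp
  rw [e1, e2]
  have hconv : 0 ≤ x ⬝ᵥ Q *ᵥ x - 2 * (x ⬝ᵥ Q *ᵥ y) + y ⬝ᵥ Q *ᵥ y := by linarith
  have hq1 : q = 1 - p := by linarith
  subst hq1
  have hp1 : 0 ≤ 1 - p := hq
  nlinarith [mul_nonneg (mul_nonneg hp hp1) hconv]
/- ======== helpers ======== -/


lemma sum_mulVec' {ι m' n' : Type*} [Fintype n'] (s : Finset ι) (M : ι → Matrix m' n' ℝ)
    (v : n' → ℝ) : (∑ r ∈ s, M r) *ᵥ v = ∑ r ∈ s, (M r *ᵥ v) := by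
  ext i
  simp only [Matrix.mulVec, dotProduct, Matrix.sum_apply, Finset.sum_apply,
    Finset.sum_mul]
  exact Finset.sum_comm

lemma dot_sum {ι m' : Type*} [Fintype m'] (s : Finset ι) (v : m' → ℝ) (f : ι → m' → ℝ) :
    v ⬝ᵥ (∑ i ∈ s, f i) = ∑ i ∈ s, v ⬝ᵥ f i := by
  simp only [dotProduct, Finset.sum_apply, Finset.mul_sum]
  exact Finset.sum_comm

lemma dot_transpose {m' n' : Type*} [Fintype m'] [Fintype n'] (A : Matrix m' n' ℝ)
    (θ : n' → ℝ) (y : m' → ℝ) : θ ⬝ᵥ (Aᵀ *ᵥ y) = (A *ᵥ θ) ⬝ᵥ y := by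
  rw [Matrix.mulVec_transpose, dotProduct_comm, ← Matrix.dotProduct_mulVec,
    dotProduct_comm]

noncomputable def aveC (l n : ℕ) (z1 : Fin n → EuclideanSpace ℝ (Fin l)) :
    Fin n → Fin l → ℝ := fun t i => z1 t i - (n : ℝ)⁻¹ * ∑ r, z1 r i

section algebra

variable (k l n : ℕ) (z1 : Fin n → EuclideanSpace ℝ (Fin l))
  (z2 : Fin n → EuclideanSpace ℝ (Fin (k - l)))

lemma mulVec_Wmat (θ : Fin l × Fin (k - l) → ℝ) (t : Fin n) (i : Fin l) :
    ((Wmat k l n z2 t) *ᵥ θ) i = ∑ c, θ (i, c) * z2 t c := by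
  simp only [Matrix.mulVec, dotProduct, Wmat, Matrix.of_apply, Fintype.sum_prod_type,
    ite_mul, zero_mul]
  rw [Finset.sum_comm]
  simp [mul_comm]

lemma resid_eq (θ : Fin l × Fin (k - l) → ℝ) (t : Fin n) (i : Fin l) :
    resid k l n z1 z2 θ t i = z1 t i - ((Wmat k l n z2 t) *ᵥ θ) i := by
  rw [resid, mulVec_Wmat]

lemma mulVec_Wc (θ : Fin l × Fin (k - l) → ℝ) (t : Fin n) (i : Fin l) :
    ((Wc k l n z2 t) *ᵥ θ) i
      = ((Wmat k l n z2 t) *ᵥ θ) i - (n : ℝ)⁻¹ * ∑ r, ((Wmat k l n z2 r) *ᵥ θ) i := by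
  rw [Wc, Matrix.sub_mulVec, Matrix.smul_mulVec, sum_mulVec']
  simp [Finset.sum_apply]

lemma centered_eq (θ : Fin l × Fin (k - l) → ℝ) (t : Fin n) (i : Fin l) :
    resid k l n z1 z2 θ t i - (n : ℝ)⁻¹ * ∑ r, resid k l n z1 z2 θ r i
      = aveC l n z1 t i - ((Wc k l n z2 t) *ᵥ θ) i := by
  rw [mulVec_Wc]
  simp only [resid_eq, aveC, Finset.sum_sub_distrib]
  ring

lemma sum_Wc (hn : 1 ≤ n) : ∑ t, Wc k l n z2 t = 0 := by
  have hne : (n : ℝ) ≠ 0 := Nat.cast_ne_zero.2 (by omega)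
  simp only [Wc, Finset.sum_sub_distrib, Finset.sum_const, Finset.card_univ,
    Fintype.card_fin]
  rw [← Nat.cast_smul_eq_nsmul ℝ, smul_smul, mul_inv_cancel₀ hne, one_smul, sub_self]

lemma Xi1_symm : (Xi1 k l n z2)ᵀ = Xi1 k l n z2 := by
  rw [Xi1, Matrix.transpose_sum]
  simp only [Matrix.transpose_sum, Matrix.transpose_smul, Matrix.transpose_mul,
    Matrix.transpose_transpose]
  rw [Finset.sum_comm]
  refine Finset.sum_congr rfl fun t _ => Finset.sum_congr rfl fun t' _ => ?_
  rw [norm_sub_rev]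

lemma quadform_Xi1 (θ v : Fin l × Fin (k - l) → ℝ) :
    θ ⬝ᵥ (Xi1 k l n z2 *ᵥ v)
      = ∑ t, ∑ t', (θ ⬝ᵥ (((Wc k l n z2 t)ᵀ * Wc k l n z2 t') *ᵥ v)) * ‖z2 t - z2 t'‖ := by
  rw [Xi1, sum_mulVec', dot_sum]
  refine Finset.sum_congr rfl fun t _ => ?_
  rw [sum_mulVec', dot_sum]
  refine Finset.sum_congr rfl fun t' _ => ?_
  rw [Matrix.smul_mulVec, dotProduct_smul]
  simp [mul_comm]

lemma dot_Xi2 (θ : Fin l × Fin (k - l) → ℝ) :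
    θ ⬝ᵥ Xi2 k l n z1 z2
      = ∑ t, ∑ t', (θ ⬝ᵥ ((Wc k l n z2 t)ᵀ *ᵥ aveC l n z1 t')) * ‖z2 t - z2 t'‖ := by
  rw [Xi2, dot_sum]
  refine Finset.sum_congr rfl fun t _ => ?_
  rw [dot_sum]
  refine Finset.sum_congr rfl fun t' _ => ?_
  rw [dotProduct_smul]
  simp only [smul_eq_mul, mul_comm]
  rfl

lemma MDD_eq_gQuad (θ : Fin l × Fin (k - l) → ℝ) :
    MDDlin k l n z1 z2 θ
      = gQuad (-(((n : ℝ) ^ 2)⁻¹) • Xi1 k l n z2)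
          ((2 * ((n : ℝ) ^ 2)⁻¹) • Xi2 k l n z1 z2)
          (-((n : ℝ) ^ 2)⁻¹ * ∑ t, ∑ t',
            (aveC l n z1 t ⬝ᵥ aveC l n z1 t') * ‖z2 t - z2 t'‖) θ := by
  set N : ℝ := ((n : ℝ) ^ 2)⁻¹ with hN
  set W : Fin n → Matrix (Fin l) (Fin l × Fin (k - l)) ℝ := Wc k l n z2 with hW
  set av : Fin n → Fin l → ℝ := aveC l n z1 with hav
  have hterm : ∀ t t' : Fin n,
      (∑ i, (resid k l n z1 z2 θ t i - (n : ℝ)⁻¹ * ∑ r, resid k l n z1 z2 θ r i) *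
        (resid k l n z1 z2 θ t' i - (n : ℝ)⁻¹ * ∑ r, resid k l n z1 z2 θ r i))
      = av t ⬝ᵥ av t' - θ ⬝ᵥ ((W t)ᵀ *ᵥ av t') - θ ⬝ᵥ ((W t')ᵀ *ᵥ av t)
          + θ ⬝ᵥ (((W t)ᵀ * W t') *ᵥ θ) := by
    intro t t'
    have h1 : (∑ i, (resid k l n z1 z2 θ t i - (n : ℝ)⁻¹ * ∑ r, resid k l n z1 z2 θ r i) *
        (resid k l n z1 z2 θ t' i - (n : ℝ)⁻¹ * ∑ r, resid k l n z1 z2 θ r i))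
        = (av t - W t *ᵥ θ) ⬝ᵥ (av t' - W t' *ᵥ θ) := by
      refine Finset.sum_congr rfl fun i _ => ?_
      rw [centered_eq, centered_eq]
      rfl
    rw [h1, sub_dotProduct, dotProduct_sub, dotProduct_sub,
      dot_transpose, dot_transpose, ← Matrix.mulVec_mulVec, dot_transpose,
      dotProduct_comm (W t *ᵥ θ) (av t'), dotProduct_comm (W t' *ᵥ θ) (av t)]
    ring
  rw [MDDlin]
  rw [Finset.sum_congr rfl fun t (_ : t ∈ univ) => Finset.sum_congr rfl
    fun t' (_ : t' ∈ univ) => by rw [hterm t t']]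
  have hsplit : ∑ t, ∑ t', (av t ⬝ᵥ av t' - θ ⬝ᵥ ((W t)ᵀ *ᵥ av t')
        - θ ⬝ᵥ ((W t')ᵀ *ᵥ av t) + θ ⬝ᵥ (((W t)ᵀ * W t') *ᵥ θ)) * ‖z2 t - z2 t'‖
      = (∑ t, ∑ t', (av t ⬝ᵥ av t') * ‖z2 t - z2 t'‖)
        - (∑ t, ∑ t', (θ ⬝ᵥ ((W t)ᵀ *ᵥ av t')) * ‖z2 t - z2 t'‖)
        - (∑ t, ∑ t', (θ ⬝ᵥ ((W t')ᵀ *ᵥ av t)) * ‖z2 t - z2 t'‖)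
        + (∑ t, ∑ t', (θ ⬝ᵥ (((W t)ᵀ * W t') *ᵥ θ)) * ‖z2 t - z2 t'‖) := by
    simp only [sub_mul, add_mul, Finset.sum_add_distrib, Finset.sum_sub_distrib]
  rw [hsplit]
  have hY : (∑ t, ∑ t', (θ ⬝ᵥ ((W t')ᵀ *ᵥ av t)) * ‖z2 t - z2 t'‖)
      = (∑ t, ∑ t', (θ ⬝ᵥ ((W t)ᵀ *ᵥ av t')) * ‖z2 t - z2 t'‖) := by
    rw [Finset.sum_comm]
    refine Finset.sum_congr rfl fun t _ => Finset.sum_congr rfl fun t' _ => ?_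
    rw [norm_sub_rev]
  rw [hY, ← dot_Xi2, ← quadform_Xi1, gQuad]
  have e1 : θ ⬝ᵥ (-N • Xi1 k l n z2) *ᵥ θ = -N * (θ ⬝ᵥ (Xi1 k l n z2 *ᵥ θ)) := by
    rw [Matrix.smul_mulVec, dotProduct_smul]
    simp
  have e2 : ((2 * N) • Xi2 k l n z1 z2) ⬝ᵥ θ = 2 * N * (θ ⬝ᵥ Xi2 k l n z1 z2) := by
    rw [smul_dotProduct, dotProduct_comm]
    simp
  rw [e1, e2]
  ring

lemma Xi1_npsd (hn : 1 ≤ n) (v : Fin l × Fin (k - l) → ℝ) :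
    v ⬝ᵥ (Xi1 k l n z2 *ᵥ v) ≤ 0 := by
  rw [quadform_Xi1]
  have hWv : ∀ t t' : Fin n, v ⬝ᵥ (((Wc k l n z2 t)ᵀ * Wc k l n z2 t') *ᵥ v)
      = (Wc k l n z2 t *ᵥ v) ⬝ᵥ (Wc k l n z2 t' *ᵥ v) := by
    intro t t'
    rw [← Matrix.mulVec_mulVec, dot_transpose]
  rw [Finset.sum_congr rfl fun t (_ : t ∈ univ) => Finset.sum_congr rfl
    fun t' (_ : t' ∈ univ) => by rw [hWv t t']]
  set u : Fin n → Fin l → ℝ := fun t => Wc k l n z2 t *ᵥ v with hu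
  have hsum0 : ∀ i : Fin l, ∑ t, u t i = 0 := by
    intro i
    have : ∑ t, u t = 0 := by
      rw [hu, ← sum_mulVec', sum_Wc k l n z2 hn, Matrix.zero_mulVec]
    calc ∑ t, u t i = (∑ t, u t) i := by rw [Finset.sum_apply]
      _ = 0 := by rw [this]; rfl
  have hswap : ∑ t, ∑ t', (u t ⬝ᵥ u t') * ‖z2 t - z2 t'‖
      = ∑ i, ∑ t, ∑ t', u t i * u t' i * ‖z2 t - z2 t'‖ := by
    have h1 : ∀ t t' : Fin n, (u t ⬝ᵥ u t') * ‖z2 t - z2 t'‖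
        = ∑ i, u t i * u t' i * ‖z2 t - z2 t'‖ := by
      intro t t'
      rw [dotProduct, Finset.sum_mul]
    rw [Finset.sum_congr rfl fun t (_ : t ∈ univ) => Finset.sum_congr rfl
      fun t' (_ : t' ∈ univ) => h1 t t']
    rw [Finset.sum_congr rfl fun t (_ : t ∈ univ) =>
      Finset.sum_comm (s := univ) (t := univ)]
    exact Finset.sum_comm
  rw [hswap]
  refine Finset.sum_nonpos fun i _ => ?_
  exact cnd_euclid z2 (fun t => u t i) (hsum0 i)

end algebra

lemma crit_iff {k l n : ℕ} (hn : 1 ≤ n) (z1 : Fin n → EuclideanSpace ℝ (Fin l))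
    (z2 : Fin n → EuclideanSpace ℝ (Fin (k - l))) (θ : Fin l × Fin (k - l) → ℝ) :
    (2 • ((-(((n : ℝ) ^ 2)⁻¹) • Xi1 k l n z2) *ᵥ θ)
        + (2 * ((n : ℝ) ^ 2)⁻¹) • Xi2 k l n z1 z2 = 0)
      ↔ Xi1 k l n z2 *ᵥ θ = Xi2 k l n z1 z2 := by
  have hn0 : (0:ℝ) < (n : ℝ) := by exact_mod_cast Nat.lt_of_lt_of_le Nat.zero_lt_one hn
  have h2n : (2 * ((n : ℝ) ^ 2)⁻¹) ≠ 0 := by positivity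
  constructor
  · intro h
    rw [Matrix.smul_mulVec, ← Nat.cast_smul_eq_nsmul ℝ] at h
    have hre : (2 * ((n : ℝ) ^ 2)⁻¹) • (Xi2 k l n z1 z2 - Xi1 k l n z2 *ᵥ θ) = 0 := by
      rw [← h]
      push_cast
      module
    rcases smul_eq_zero.mp hre with h3 | h3
    · exact absurd h3 h2n
    · rw [← sub_eq_zero]
      rw [sub_eq_zero] at h3 ⊢
      exact h3.symm
  · intro h
    rw [Matrix.smul_mulVec, h, ← Nat.cast_smul_eq_nsmul ℝ]
    push_cast
    module

/-- Closed-form MDD estimator for the multiple linear model: if `Ξ_{1n}` is invertible then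
`θ̂ = Ξ_{1n}^{-1} Ξ_{2n}` minimizes `MDD_n` over `ℝ^{l(k−l)}`; moreover `MDD_n` is a convex
quadratic function of `θ`, and every minimizer satisfies `Ξ_{1n} θ = Ξ_{2n}`. -/
theorem statement19 (k l n : ℕ) (hn : 1 ≤ n)
    (z1 : Fin n → EuclideanSpace ℝ (Fin l))
    (z2 : Fin n → EuclideanSpace ℝ (Fin (k - l))) :
    (IsUnit (Xi1 k l n z2).det →
      ∀ θ : Fin l × Fin (k - l) → ℝ,
        MDDlin k l n z1 z2 ((Xi1 k l n z2)⁻¹.mulVec (Xi2 k l n z1 z2)) ≤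
          MDDlin k l n z1 z2 θ) ∧
    ConvexOn ℝ Set.univ (MDDlin k l n z1 z2) ∧
    (∃ (Q : Matrix (Fin l × Fin (k - l)) (Fin l × Fin (k - l)) ℝ)
        (b : (Fin l × Fin (k - l)) → ℝ) (c : ℝ),
      ∀ θ, MDDlin k l n z1 z2 θ =
        dotProduct θ (Q.mulVec θ) + dotProduct b θ + c) ∧
    (∀ θ : Fin l × Fin (k - l) → ℝ,
      (∀ θ', MDDlin k l n z1 z2 θ ≤ MDDlin k l n z1 z2 θ') →
        (Xi1 k l n z2).mulVec θ = Xi2 k l n z1 z2) := by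
  classical
  have hMDD : ∀ θ, MDDlin k l n z1 z2 θ
      = gQuad (-(((n : ℝ) ^ 2)⁻¹) • Xi1 k l n z2)
          ((2 * ((n : ℝ) ^ 2)⁻¹) • Xi2 k l n z1 z2)
          (-((n : ℝ) ^ 2)⁻¹ * ∑ t, ∑ t',
            (aveC l n z1 t ⬝ᵥ aveC l n z1 t') * ‖z2 t - z2 t'‖) θ :=
    fun θ => MDD_eq_gQuad k l n z1 z2 θ
  have hn0 : (0:ℝ) < (n : ℝ) := by exact_mod_cast Nat.lt_of_lt_of_le Nat.zero_lt_one hn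
  have hN : (0:ℝ) < ((n : ℝ) ^ 2)⁻¹ := by positivity
  have hsym : (-(((n : ℝ) ^ 2)⁻¹) • Xi1 k l n z2)ᵀ = -(((n : ℝ) ^ 2)⁻¹) • Xi1 k l n z2 := by
    rw [Matrix.transpose_smul, Xi1_symm]
  have hpsd : ∀ v, 0 ≤ v ⬝ᵥ (-(((n : ℝ) ^ 2)⁻¹) • Xi1 k l n z2) *ᵥ v := by
    intro v
    rw [Matrix.smul_mulVec, dotProduct_smul]
    have h1 := Xi1_npsd k l n z2 hn v
    simp only [smul_eq_mul, neg_mul]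
    nlinarith
  refine ⟨?_, ?_, ?_, ?_⟩
  · intro hunit θ
    have hsolve : Xi1 k l n z2 *ᵥ ((Xi1 k l n z2)⁻¹ *ᵥ Xi2 k l n z1 z2)
        = Xi2 k l n z1 z2 := by
      rw [Matrix.mulVec_mulVec, Matrix.mul_nonsing_inv _ hunit, Matrix.one_mulVec]
    rw [hMDD, hMDD]
    exact quad_min_of_crit hsym hpsd ((crit_iff hn z1 z2 _).mpr hsolve) θ
  · have hfun : MDDlin k l n z1 z2 = gQuad (-(((n : ℝ) ^ 2)⁻¹) • Xi1 k l n z2)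
        ((2 * ((n : ℝ) ^ 2)⁻¹) • Xi2 k l n z1 z2)
        (-((n : ℝ) ^ 2)⁻¹ * ∑ t, ∑ t',
          (aveC l n z1 t ⬝ᵥ aveC l n z1 t') * ‖z2 t - z2 t'‖) := funext hMDD
    rw [hfun]
    exact quad_convexOn hsym hpsd _ _
  · exact ⟨_, _, _, fun θ => hMDD θ⟩
  · intro θ hmin
    refine (crit_iff hn z1 z2 θ).mp (quad_crit_of_min
      (c := -((n : ℝ) ^ 2)⁻¹ * ∑ t, ∑ t',
        (aveC l n z1 t ⬝ᵥ aveC l n z1 t') * ‖z2 t - z2 t'‖)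
      hsym hpsd fun θ' => ?_)
    rw [← hMDD, ← hMDD]
    exact hmin θ'
end
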